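/- Let G be a finite simple graph with maximum degree at most Δ, let C be a proper partial coloring of G² with colors from [Δ²+1], and let K be a nonempty set of vertices. Then |Ψ(K)| ≥ |K̊| + 1 − ā_K as a real inequality, i.e., |K|·|Ψ(K)| ≥ |K|·(|K̊| + 1) − Σ_{v∈K} a_v. -/

import Mathlib

open Finset

variable {V : Type*} [Fintype V] [DecidableEq V]

/-- Adjacency in the square graph `G²`: distinct vertices at distance at most 2 in `G`. -/
def sqAdj (G : SimpleGraph V) (u v : V) : Prop :=
  u ≠ v ∧ (G.Adj u v ∨ ∃ w, G.Adj u w ∧ G.Adj w v)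

instance (G : SimpleGraph V) [DecidableRel G.Adj] : DecidableRel (sqAdj G) := fun u v =>
  inferInstanceAs (Decidable (u ≠ v ∧ (G.Adj u v ∨ ∃ w, G.Adj u w ∧ G.Adj w v)))

/-- The distance-2 neighborhood `N²(v)`: the neighborhood of `v` in the square graph `G²`. -/
def N2 (G : SimpleGraph V) [DecidableRel G.Adj] (v : V) : Finset V :=
  univ.filter fun u => sqAdj G v u

/-- `C` is a proper partial coloring of `G²`: two vertices adjacent in `G²`
that are both colored receive distinct colors. -/
def ProperPartial (G : SimpleGraph V) {n : ℕ} (C : V → Option (Fin n)) : Prop :=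
  ∀ u v : V, sqAdj G u v → ∀ c : Fin n, C u = some c → C v ≠ some c

/-- `C(S)`: the set of colors used on the colored vertices of `S`. -/
def usedColors {n : ℕ} (C : V → Option (Fin n)) (S : Finset V) : Finset (Fin n) :=
  S.biUnion fun v => (C v).toFinset

/-- The palette of a set `S`: colors not used by any colored vertex of `S`.
For `S = K` this is the clique palette `Ψ(K)`; for `S = N²(v)` it is the palette `Ψ(v)`. -/
def palette {n : ℕ} (C : V → Option (Fin n)) (S : Finset V) : Finset (Fin n) :=
  univ \ usedColors C S

/-- A colorful matching in `K` w.r.t. `C`: a collection of pairwise disjoint pairs of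
distinct vertices of `K`, non-adjacent in `G²`, both colored with the same color. -/
def IsColorfulMatching (G : SimpleGraph V) {n : ℕ} (C : V → Option (Fin n))
    (K : Finset V) (M : Finset (V × V)) : Prop :=
  (∀ p ∈ M, p.1 ≠ p.2 ∧ p.1 ∈ K ∧ p.2 ∈ K ∧ ¬ sqAdj G p.1 p.2 ∧
      C p.1 ≠ none ∧ C p.1 = C p.2) ∧
  ∀ p ∈ M, ∀ q ∈ M, p ≠ q → ({p.1, p.2} : Finset V) ∩ {q.1, q.2} = ∅

/-- `|Ψ(K)| ≥ |K̊| + 1 − ā_K` as a real inequality: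
`|K|·|Ψ(K)| ≥ |K|·(|K̊| + 1) − Σ_{v∈K} a_v`. -/
theorem cliquePalette_ge_uncolored_sub_avgAntiDeg
    (G : SimpleGraph V) [DecidableRel G.Adj] (Δ : ℕ)
    (hdeg : ∀ v, G.degree v ≤ Δ)
    (C : V → Option (Fin (Δ ^ 2 + 1))) (hC : ProperPartial G C)
    (K : Finset V) (hK : K.Nonempty) :
    (K.card : ℝ) * (((K.filter fun v => C v = none).card : ℝ) + 1)
        - ∑ v ∈ K, ((K \ N2 G v).card : ℝ)
      ≤ (K.card : ℝ) * (palette C K).card := by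
  -- |N²(v)| ≤ Δ²
  have hN2 : ∀ v : V, (N2 G v).card ≤ Δ ^ 2 := by
    intro v
    have hsub : N2 G v ⊆ G.neighborFinset v ∪
        (G.neighborFinset v).biUnion (fun w => G.neighborFinset w \ {v}) := by
      intro u hu
      simp only [N2, mem_filter, mem_univ, true_and] at hu
      obtain ⟨hne, h⟩ := hu
      rcases h with h | ⟨w, hvw, hwu⟩
      · exact mem_union_left _ (by simpa using h)
      · refine mem_union_right _ (mem_biUnion.2 ⟨w, by simpa using hvw, ?_⟩)
        simp [SimpleGraph.mem_neighborFinset, hwu, hne.symm]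
    have h1 : (G.neighborFinset v).card ≤ Δ := by
      simpa [SimpleGraph.card_neighborFinset_eq_degree] using hdeg v
    have h2 : ((G.neighborFinset v).biUnion (fun w => G.neighborFinset w \ {v})).card
        ≤ Δ * (Δ - 1) := by
      calc ((G.neighborFinset v).biUnion (fun w => G.neighborFinset w \ {v})).card
          ≤ ∑ w ∈ G.neighborFinset v, (G.neighborFinset w \ {v}).card :=
            card_biUnion_le
        _ ≤ ∑ _w ∈ G.neighborFinset v, (Δ - 1) := by
            apply sum_le_sum
            intro w hw
            have hv : ({v} : Finset V) ⊆ G.neighborFinset w := by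
              simp only [SimpleGraph.mem_neighborFinset] at hw
              simp [SimpleGraph.mem_neighborFinset, hw.symm]
            rw [Finset.card_sdiff_of_subset hv, card_singleton]
            have hdw : (G.neighborFinset w).card ≤ Δ := by
              simpa [SimpleGraph.card_neighborFinset_eq_degree] using hdeg w
            omega
        _ = (G.neighborFinset v).card * (Δ - 1) := by rw [sum_const, smul_eq_mul]
        _ ≤ Δ * (Δ - 1) := Nat.mul_le_mul_right _ h1
    have := (card_le_card hsub).trans (card_union_le _ _)
    have hΔ : Δ + Δ * (Δ - 1) ≤ Δ ^ 2 := by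
      cases Δ with
      | zero => simp
      | succ d => simp only [Nat.succ_sub_one, pow_two]; ring_nf; nlinarith
    omega
  -- |C(K)| + |K̊| ≤ |K|
  have hused_le : (usedColors C K).card + (K.filter fun v => C v = none).card ≤ K.card := by
    have h1 : (usedColors C K).card ≤ (K.filter fun v => ¬(C v = none)).card := by
      calc (usedColors C K).card ≤ ∑ v ∈ K, (C v).toFinset.card := card_biUnion_le
        _ = ∑ v ∈ K, (if C v = none then 0 else 1) := by
            refine sum_congr rfl fun v _ => ?_
            cases h : C v <;> simp [h]
        _ = (K.filter fun v => ¬(C v = none)).card := by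
            rw [card_filter]
            refine sum_congr rfl fun v _ => ?_
            by_cases h : C v = none <;> simp [h]
    have h2 := Finset.card_filter_add_card_filter_not (s := K)
      (p := fun v => C v = none)
    omega
  -- palette cardinality
  have hu_le : (usedColors C K).card ≤ Δ ^ 2 + 1 := by
    simpa using card_le_univ (usedColors C K)
  have hpal : ((palette C K).card : ℝ) = (Δ ^ 2 + 1 : ℝ) - (usedColors C K).card := by
    rw [palette, card_sdiff_of_subset (subset_univ _), card_univ, Fintype.card_fin]
    push_cast [Nat.cast_sub hu_le]
    ring
  -- anti-degree lower bound summed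
  have hsum : (K.card : ℝ) * K.card - K.card * Δ ^ 2 ≤ ∑ v ∈ K, ((K \ N2 G v).card : ℝ) := by
    have h : ∑ _v ∈ K, ((K.card : ℝ) - Δ ^ 2) ≤ ∑ v ∈ K, ((K \ N2 G v).card : ℝ) := by
      refine sum_le_sum fun v _ => ?_
      have h1 : K.card ≤ (K \ N2 G v).card + (N2 G v).card :=
        card_le_card_sdiff_add_card
      have h2 := hN2 v
      have : (K.card : ℝ) ≤ ((K \ N2 G v).card : ℝ) + Δ ^ 2 := by
        have : K.card ≤ (K \ N2 G v).card + Δ ^ 2 := by omega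
        exact_mod_cast this
      linarith
    rw [sum_const, nsmul_eq_mul] at h
    linarith [h]
  -- assemble
  have hk : (1 : ℝ) ≤ K.card := by exact_mod_cast hK.card_pos
  have hUu : ((usedColors C K).card : ℝ) + ((K.filter fun v => C v = none).card : ℝ)
      ≤ (K.card : ℝ) := by exact_mod_cast hused_le
  set kr : ℝ := (K.card : ℝ)
  set ur : ℝ := ((usedColors C K).card : ℝ)
  set Ur : ℝ := ((K.filter fun v => C v = none).card : ℝ)
  rw [hpal]
  have hmul : kr * (ur + Ur) ≤ kr * kr :=
    mul_le_mul_of_nonneg_left hUu (by linarith)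
  nlinarith [hsum, hmul]
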